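/- Let V be a finite-dimensional vector space over a field R equipped with a derivation δ (R a commutative Q-algebra or field with derivation), B : V × V → R a non-degenerate bilinear form that is symmetric or antisymmetric, and ∇₀ : V → V a connection (additive map with ∇₀(av) = δ(a)v + a∇₀v). Then there exists exactly one connection ∇ : V → V such that (a) δ(B(u,v)) = B(∇u, v) + B(u, ∇v) for all u,v ∈ V (B-horizontality), and (b) B(Λu, v) = B(u, Λv) for Λ = ∇ − ∇₀ (B-symmetry of the difference). Explicitly ∇ = (1/2)∇₀ + (1/2)(B*)^{−1} ∘ ∇₀* ∘ B*, where B* : V → V* is u ↦ B(u,−) and ∇₀* is the dual connection determined by δ⟨u*, v⟩ = ⟨∇₀* u*, v⟩ + ⟨u*, ∇₀ v⟩. -/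

import Mathlib

/-- Existence and uniqueness of the Chern connection on a vector space: given a
non-degenerate symmetric or antisymmetric bilinear form `B` and a connection `∇₀`
(relative to a derivation `δ` on the field `R`, with `2 ≠ 0`), there is exactly one
connection `∇` that is `B`-horizontal and such that `∇ − ∇₀` is `B`-symmetric. -/
theorem stmt_18 (R : Type*) [Field R] (h2 : (2 : R) ≠ 0)
    (δ : R → R) (hδadd : ∀ a b, δ (a + b) = δ a + δ b)
    (hδmul : ∀ a b, δ (a * b) = a * δ b + δ a * b)
    (V : Type*) [AddCommGroup V] [Module R V] [FiniteDimensional R V]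
    (B : V →ₗ[R] V →ₗ[R] R)
    (hB : (∀ u v, B u v = B v u) ∨ (∀ u v, B u v = - B v u))
    (hnd : ∀ v, (∀ w, B v w = 0) → v = 0)
    (nabla0 : V → V)
    (h0add : ∀ u v, nabla0 (u + v) = nabla0 u + nabla0 v)
    (h0smul : ∀ (a : R) (v : V), nabla0 (a • v) = δ a • v + a • nabla0 v) :
    ∃! nabla : V → V,
      (∀ u v, nabla (u + v) = nabla u + nabla v) ∧
      (∀ (a : R) (v : V), nabla (a • v) = δ a • v + a • nabla v) ∧
      (∀ u v, δ (B u v) = B (nabla u) v + B u (nabla v)) ∧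
      (∀ u v, B (nabla u - nabla0 u) v = B u (nabla v - nabla0 v)) := by
  classical
  -- right nondegeneracy
  have hnd' : ∀ x : V, (∀ u, B u x = 0) → x = 0 := by
    intro x hx
    apply hnd
    intro w
    rcases hB with h | h
    · rw [h]; exact hx w
    · rw [h, hx w, neg_zero]
  have hext : ∀ x y : V, (∀ u, B u x = B u y) → x = y := by
    intro x y h
    have hxy : x - y = 0 := by
      apply hnd'
      intro u
      rw [map_sub, h u, sub_self]
    have := sub_eq_zero.mp hxy
    exact this
  have hδ0 : δ 0 = 0 := by
    have h := hδadd 0 0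
    simp only [add_zero] at h
    linear_combination -h
  have hδneg : ∀ a, δ (-a) = - δ a := by
    intro a
    have h := hδadd a (-a)
    rw [add_neg_cancel, hδ0] at h
    linear_combination -h
  have hflip : LinearMap.BilinForm.Nondegenerate (LinearMap.flip B) :=
    ⟨fun x hx => hnd' x (fun u => hx u), fun x hx => hnd x (fun u => hx u)⟩
  -- the defining functional
  set g : V → V → R :=
    fun u v => (2 : R)⁻¹ * (δ (B u v) - B (nabla0 u) v + B u (nabla0 v)) with hg
  have hGadd : ∀ (u u' v : V), g (u + u') v = g u v + g u' v := by
    intro u u' v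
    simp only [hg, map_add, LinearMap.add_apply, hδadd, h0add]
    ring
  have hGsmul : ∀ (a : R) (u v : V), g (a • u) v = a * g u v := by
    intro a u v
    simp only [hg, map_smul, LinearMap.smul_apply, LinearMap.add_apply, smul_eq_mul, hδmul, h0smul, map_add]
    ring
  let G : V → (V →ₗ[R] R) := fun v =>
    { toFun := fun u => g u v
      map_add' := fun u u' => hGadd u u' v
      map_smul' := fun a u => hGsmul a u v }
  let e := LinearMap.BilinForm.toDual (LinearMap.flip B) hflip
  set nabla : V → V := fun v => e.symm (G v) with hnabla
  have hkey : ∀ u v, B u (nabla v) = g u v := by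
    intro u v
    have := LinearMap.BilinForm.apply_toDual_symm_apply (B := LinearMap.flip B)
      (hB := hflip) (f := G v) (v := u)
    simpa [LinearMap.flip_apply, G] using this
  -- properties of g in terms of nabla
  have gadd : ∀ u v w, g u (v + w) = g u v + g u w := by
    intro u v w
    simp only [hg, map_add, hδadd, h0add]
    ring
  have gsmul : ∀ (a : R) u v, g u (a • v) = δ a * B u v + a * g u v := by
    intro a u v
    simp only [hg, map_smul, smul_eq_mul, hδmul, h0smul, map_add]
    field_simp
    ring
  refine ⟨nabla, ⟨?_, ?_, ?_, ?_⟩, ?_⟩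
  · -- additivity
    intro u v
    apply hext
    intro w
    rw [map_add, hkey, hkey, hkey, gadd]
  · -- Leibniz
    intro a v
    apply hext
    intro w
    rw [hkey, gsmul, map_add, map_smul, map_smul, smul_eq_mul, smul_eq_mul, hkey]
  · -- horizontality
    intro u v
    have h1 : B u (nabla v) = g u v := hkey u v
    have h2' : B v (nabla u) = g v u := hkey v u
    rcases hB with h | h
    · have hs : B (nabla u) v = g v u := by rw [h]; exact h2'
      rw [h1, hs, hg]
      simp only
      have e1 : B v u = B u v := h v u
      have e2 : B (nabla0 v) u = B u (nabla0 v) := h (nabla0 v) u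
      have e3 : B v (nabla0 u) = B (nabla0 u) v := h v (nabla0 u)
      rw [e1, e2, e3]
      field_simp
      ring
    · have hs : B (nabla u) v = - g v u := by rw [h]; rw [h2']
      rw [h1, hs, hg]
      simp only
      have e1 : B v u = - B u v := h v u
      have e2 : B (nabla0 v) u = - B u (nabla0 v) := h (nabla0 v) u
      have e3 : B v (nabla0 u) = - B (nabla0 u) v := h v (nabla0 u)
      rw [e1, e2, e3, hδneg]
      field_simp
      ring
  · -- symmetry of the difference
    intro u v
    rw [map_sub, LinearMap.sub_apply, map_sub, hkey]
    rcases hB with h | h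
    · have hs : B (nabla u) v = g v u := by rw [h]; exact hkey v u
      rw [hs, hg]
      simp only
      have e1 : B v u = B u v := h v u
      have e2 : B (nabla0 v) u = B u (nabla0 v) := h (nabla0 v) u
      have e3 : B v (nabla0 u) = B (nabla0 u) v := h v (nabla0 u)
      rw [e1, e2, e3]
      field_simp
      ring
    · have hs : B (nabla u) v = - g v u := by rw [h]; rw [hkey v u]
      rw [hs, hg]
      simp only
      have e1 : B v u = - B u v := h v u
      have e2 : B (nabla0 v) u = - B u (nabla0 v) := h (nabla0 v) u
      have e3 : B v (nabla0 u) = - B (nabla0 u) v := h v (nabla0 u)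
      rw [e1, e2, e3, hδneg]
      field_simp
      ring
  · -- uniqueness
    rintro y ⟨_, _, hc, hd⟩
    funext v
    apply hext
    intro u
    rw [hkey]
    have hd' := hd u v
    rw [map_sub, LinearMap.sub_apply, map_sub] at hd'
    have hc' := hc u v
    -- 2 * B u (y v) = δ (B u v) - B (nabla0 u) v + B u (nabla0 v)
    have h2y : 2 * B u (y v) = δ (B u v) - B (nabla0 u) v + B u (nabla0 v) := by
      linear_combination -hc' - hd'
    apply mul_left_cancel₀ h2
    rw [h2y, hg]
    field_simp
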